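/- Let f, g: ℝⁿ → ℝ₊ be radial integrable functions, f(r) = f_R(‖r‖), g(r) = g_R(‖r‖). Then f ≻ g on ℝⁿ if and only if f̃ ≻ g̃ on ℝ₊, where f̃(x) = f_R(x^{1/n}) and g̃(x) = g_R(x^{1/n}). -/

import Mathlib

open MeasureTheory Set Real

lemma radial_key (n : ℕ) (hn : 0 < n) (F : ℝ → ℝ) :
    ∫ r : EuclideanSpace ℝ (Fin n), F ‖r‖ =
      (volume (Metric.ball (0 : EuclideanSpace ℝ (Fin n)) 1)).toReal *
        ∫ x in Ici (0:ℝ), F (x ^ ((1:ℝ)/n)) := by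
  haveI : Nonempty (Fin n) := ⟨⟨0, hn⟩⟩
  have hdim : Module.finrank ℝ (EuclideanSpace ℝ (Fin n)) = n := by
    simp [finrank_euclideanSpace]
  set ω := (volume (Metric.ball (0 : EuclideanSpace ℝ (Fin n)) 1)).toReal
  have h1 := MeasureTheory.integral_fun_norm_addHaar
      (volume : Measure (EuclideanSpace ℝ (Fin n))) F
  rw [hdim] at h1
  have hp : ((1:ℝ)/n) ≠ 0 := by positivity
  have h2 : (∫ x in Ici (0:ℝ), F (x ^ ((1:ℝ)/n))) =
      ∫ x in Ioi (0:ℝ), F (x ^ ((1:ℝ)/n)) :=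
    (MeasureTheory.integral_Ici_eq_integral_Ioi)
  set G : ℝ → ℝ := fun y => (n : ℝ) * (y ^ ((n:ℝ) - 1) * F y) with hG
  have h3 := integral_comp_rpow_Ioi G hp
  have h4 : ∀ x ∈ Ioi (0:ℝ),
      (|((1:ℝ)/n)| * x ^ ((1:ℝ)/n - 1)) • G (x ^ ((1:ℝ)/n)) = F (x ^ ((1:ℝ)/n)) := by
    intro x hx
    have hx0 : (0:ℝ) < x := hx
    have hnn0 : (n:ℝ) ≠ 0 := by positivity
    have hxp : (x ^ ((1:ℝ)/n)) ^ ((n:ℝ) - 1) = x ^ (1 - (1:ℝ)/n) := by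
      rw [← Real.rpow_mul hx0.le]
      congr 1
      field_simp
    have hnn : (0:ℝ) < (n:ℝ) := by exact_mod_cast hn
    simp only [hG, smul_eq_mul, hxp, abs_of_pos (by positivity : (0:ℝ) < (1:ℝ)/n)]
    rw [show ((1:ℝ)/n * x ^ ((1:ℝ)/n - 1)) * ((n:ℝ) * (x ^ (1 - (1:ℝ)/n) * F (x ^ ((1:ℝ)/n))))
        = (x ^ ((1:ℝ)/n - 1) * x ^ (1 - (1:ℝ)/n)) * (((1:ℝ)/n) * n) * F (x ^ ((1:ℝ)/n)) by ring,
      ← Real.rpow_add hx0]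
    field_simp
    rw [show ((1:ℝ) - n + (n - 1)) / n = 0 by ring, Real.rpow_zero, one_mul]
  have h5 : (∫ x in Ioi (0:ℝ), F (x ^ ((1:ℝ)/n))) = ∫ y in Ioi (0:ℝ), G y := by
    rw [← h3]
    exact (setIntegral_congr_fun measurableSet_Ioi h4).symm
  have h6 : (∫ y in Ioi (0:ℝ), G y) = (n:ℝ) * ∫ y in Ioi (0:ℝ), y ^ ((n:ℝ) - 1) * F y := by
    simp only [hG]
    rw [MeasureTheory.integral_const_mul]
  have h7 : (∫ y in Ioi (0:ℝ), y ^ ((n:ℝ) - 1) * F y)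
      = ∫ y in Ioi (0:ℝ), y ^ (n - 1) • F y := by
    refine setIntegral_congr_fun measurableSet_Ioi fun y hy => ?_
    have hcast : ((n - 1 : ℕ) : ℝ) = (n:ℝ) - 1 := by
      rw [Nat.cast_sub hn, Nat.cast_one]
    rw [← hcast, Real.rpow_natCast, smul_eq_mul]
  rw [h1, h2, h5, h6, h7]
  push_cast
  rw [nsmul_eq_mul, smul_eq_mul]
  simp only [measureReal_def, ω]
  ring

/-- For radial integrable `f, g : ℝⁿ → ℝ₊` with `f r = f_R ‖r‖`,
`g r = g_R ‖r‖`, one has `f ≻ g` on ℝⁿ iff `f̃ ≻ g̃` on ℝ₊, where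
`f̃ x = f_R (x^{1/n})` and `g̃ x = g_R (x^{1/n})`. -/
theorem radial_majorization_iff_one_dim
    (n : ℕ) (hn : 0 < n)
    (f g : EuclideanSpace ℝ (Fin n) → ℝ) (fR gR : ℝ → ℝ)
    (hf_rad : ∀ r, f r = fR ‖r‖) (hg_rad : ∀ r, g r = gR ‖r‖)
    (hf_nonneg : ∀ r, 0 ≤ f r) (hg_nonneg : ∀ r, 0 ≤ g r)
    (hf_int : Integrable f) (hg_int : Integrable g) :
    ((∀ t : ℝ, 0 ≤ t → ∫ r, max (g r - t) 0 ≤ ∫ r, max (f r - t) 0) ∧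
      ∫ r, g r = ∫ r, f r)
    ↔
    ((∀ t : ℝ, 0 ≤ t →
        ∫ x in Ici (0:ℝ), max (gR (x ^ ((1:ℝ)/n)) - t) 0 ≤
          ∫ x in Ici (0:ℝ), max (fR (x ^ ((1:ℝ)/n)) - t) 0) ∧
      ∫ x in Ici (0:ℝ), gR (x ^ ((1:ℝ)/n)) = ∫ x in Ici (0:ℝ), fR (x ^ ((1:ℝ)/n))) := by
  haveI : Nonempty (Fin n) := ⟨⟨0, hn⟩⟩
  set ω := (volume (Metric.ball (0 : EuclideanSpace ℝ (Fin n)) 1)).toReal with hω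
  have hω_pos : 0 < ω := by
    refine ENNReal.toReal_pos (ne_of_gt (Metric.measure_ball_pos _ _ one_pos)) ?_
    exact (measure_ball_lt_top).ne
  have keyf : ∀ t : ℝ, (∫ r, max (f r - t) 0) =
      ω * ∫ x in Ici (0:ℝ), max (fR (x ^ ((1:ℝ)/n)) - t) 0 := by
    intro t
    have : (∫ r, max (f r - t) 0) =
        ∫ r : EuclideanSpace ℝ (Fin n), (fun s => max (fR s - t) 0) ‖r‖ := by
      simp only [hf_rad]
    rw [this, radial_key n hn (fun s => max (fR s - t) 0)]
  have keyg : ∀ t : ℝ, (∫ r, max (g r - t) 0) =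
      ω * ∫ x in Ici (0:ℝ), max (gR (x ^ ((1:ℝ)/n)) - t) 0 := by
    intro t
    have : (∫ r, max (g r - t) 0) =
        ∫ r : EuclideanSpace ℝ (Fin n), (fun s => max (gR s - t) 0) ‖r‖ := by
      simp only [hg_rad]
    rw [this, radial_key n hn (fun s => max (gR s - t) 0)]
  have keyf0 : (∫ r, f r) = ω * ∫ x in Ici (0:ℝ), fR (x ^ ((1:ℝ)/n)) := by
    have : (∫ r, f r) = ∫ r : EuclideanSpace ℝ (Fin n), fR ‖r‖ := by
      simp only [hf_rad]
    rw [this, radial_key n hn fR]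
  have keyg0 : (∫ r, g r) = ω * ∫ x in Ici (0:ℝ), gR (x ^ ((1:ℝ)/n)) := by
    have : (∫ r, g r) = ∫ r : EuclideanSpace ℝ (Fin n), gR ‖r‖ := by
      simp only [hg_rad]
    rw [this, radial_key n hn gR]
  constructor
  · rintro ⟨h1, h2⟩
    refine ⟨fun t ht => ?_, ?_⟩
    · have := h1 t ht
      rw [keyf t, keyg t] at this
      exact le_of_mul_le_mul_left this hω_pos
    · have := h2
      rw [keyf0, keyg0] at this
      exact mul_left_cancel₀ hω_pos.ne' this
  · rintro ⟨h1, h2⟩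
    refine ⟨fun t ht => ?_, ?_⟩
    · rw [keyf t, keyg t]
      exact mul_le_mul_of_nonneg_left (h1 t ht) hω_pos.le
    · rw [keyf0, keyg0, h2]
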